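/- For a connected n-configuration C_n, the j-contraction of its j-predomain is a connected (n-1)-configuration: contr_j(C_n^{j-dom}) is connected, where C_n^{j-dom} consists of those coordinates dx^1_{k_1} ⊗ ⋯ ⊗ dx^j_{k_j} ⊗ ⋯ ⊗ dx^n_{k_n} ∈ C_n such that the coordinate with j-th index k_j − 1 (and the other indices unchanged) does not belong to C_n. -/
import Mathlib


/-- A coordinate of the `n`-dimensional network `Z_n`. -/
abbrev Coord (n : ℕ) := Fin n → ℤ

/-- One step of a zigzag of contractions inside a configuration `C`. -/
def ConfigStep {n : ℕ} (C : Set (Coord (n + 1))) (x y : Coord (n + 1)) : Prop :=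
  x ∈ C ∧ y ∈ C ∧ ∃ j : Fin (n + 1), j.removeNth x = j.removeNth y

/-- A configuration is connected when any two of its coordinates are joined by a
zigzag of contractions. -/
def IsConnectedConfig {n : ℕ} (C : Set (Coord (n + 1))) : Prop :=
  ∀ x ∈ C, ∀ y ∈ C, Relation.ReflTransGen (ConfigStep C) x y

/-- The `j`-predomain of a configuration `C`: the coordinates `x ∈ C` such that the
coordinate obtained from `x` by decreasing the `j`-th index by `1` does not belong
to `C`. -/
def jPredomain {n : ℕ} (j : Fin (n + 2)) (C : Set (Coord (n + 2))) :
    Set (Coord (n + 2)) :=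
  {x | x ∈ C ∧ Function.update x j (x j - 1) ∉ C}

lemma removeNth_update {n : ℕ} (j : Fin (n + 2)) (x : Coord (n + 2)) (m : ℤ) :
    j.removeNth (Function.update x j m) = j.removeNth x := by
  funext p
  simp [Fin.removeNth, Function.update_of_ne (Fin.succAbove_ne j p)]

lemma exists_predomain_of_mem {n : ℕ} (C : Set (Coord (n + 2))) (hfin : C.Finite)
    (j : Fin (n + 2)) {x : Coord (n + 2)} (hx : x ∈ C) :
    ∃ y ∈ jPredomain j C, j.removeNth y = j.removeNth x := by
  set A : Set ℤ := {m | Function.update x j m ∈ C} with hA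
  have hinj : Function.Injective (fun m : ℤ => Function.update x j m) := by
    intro a b hab
    have := congrFun hab j
    simpa using this
  have hAfin : A.Finite := Set.Finite.preimage (hinj.injOn) hfin
  have hBfin : (A ∩ Set.Iic (x j)).Finite := hAfin.inter_of_left _
  have hBne : (A ∩ Set.Iic (x j)).Nonempty :=
    ⟨x j, by simpa [hA] using hx, Set.mem_Iic.2 le_rfl⟩
  obtain ⟨m, hm, hmin⟩ := Set.exists_min_image _ id hBfin hBne
  refine ⟨Function.update x j m, ⟨hm.1, ?_⟩, removeNth_update j x m⟩
  intro hmem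
  have hupd : Function.update (Function.update x j m) j
      (Function.update x j m j - 1) = Function.update x j (m - 1) := by
    simp [Function.update_idem]
  rw [hupd] at hmem
  have h1 : m - 1 ∈ A ∩ Set.Iic (x j) :=
    ⟨hmem, Set.mem_Iic.2 (le_trans (by omega) (Set.mem_Iic.1 hm.2))⟩
  have := hmin _ h1
  simp only [id] at this
  omega

theorem predomain_contraction_connected {n : ℕ} (C : Set (Coord (n + 2)))
    (hfin : C.Finite) (hconn : IsConnectedConfig C) (j : Fin (n + 2)) :
    IsConnectedConfig ((fun x => j.removeNth x) '' jPredomain j C) := by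
  set D := (fun x => j.removeNth x) '' jPredomain j C with hD
  -- every point of C projects into D
  have hproj : ∀ x ∈ C, j.removeNth x ∈ D := by
    intro x hx
    obtain ⟨y, hy, hyx⟩ := exists_predomain_of_mem C hfin j hx
    exact ⟨y, hy, hyx⟩
  -- each step in C projects to a reflexive-transitive step in D
  have hstep : ∀ x y, ConfigStep C x y →
      Relation.ReflTransGen (ConfigStep D) (j.removeNth x) (j.removeNth y) := by
    rintro x y ⟨hx, hy, i, hi⟩
    by_cases hij : i = j
    · subst hij
      rw [hi]
    · refine Relation.ReflTransGen.single ⟨hproj x hx, hproj y hy, ?_⟩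
      obtain ⟨k, hk⟩ := Fin.exists_succAbove_eq hij
      refine ⟨k, ?_⟩
      funext p
      have hne : j.succAbove (k.succAbove p) ≠ i := by
        rw [← hk]
        intro h
        exact Fin.succAbove_ne k p (Fin.succAbove_right_injective h)
      obtain ⟨q, hq⟩ := Fin.exists_succAbove_eq hne
      show x (j.succAbove (k.succAbove p)) = y (j.succAbove (k.succAbove p))
      rw [← hq]
      exact congrFun hi q
  -- lift zigzags along the projection
  have hlift : ∀ x y, Relation.ReflTransGen (ConfigStep C) x y →
      Relation.ReflTransGen (ConfigStep D) (j.removeNth x) (j.removeNth y) := by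
    intro x y h
    induction h with
    | refl => exact Relation.ReflTransGen.refl
    | tail _ hs ih => exact ih.trans (hstep _ _ hs)
  rintro a ⟨x, hx, rfl⟩ b ⟨y, hy, rfl⟩
  exact hlift x y (hconn x hx.1 y hy.1)
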